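/- The number of classes D ∈ Λ₅ that can be written in the form D = E + E′ for exceptional classes E, E′ (not necessarily distinct) is exactly 106; these are the effective classes of anticanonical degree 2 on the degree-4 del Pezzo surface, counted type by type as 5 + 10 + 30 + 5 + 10 + 30 + 5 + 10 + 1 = 106. -/

import Mathlib

/-- The intersection pairing on the Picard lattice `Λ_r = ℤ^(r+1)`:
`⟨x, y⟩ = x₀y₀ − x₁y₁ − ⋯ − x_r y_r`. -/
def pair {r : ℕ} (x y : Fin (r + 1) → ℤ) : ℤ :=
  x 0 * y 0 - ∑ i : Fin r, x i.succ * y i.succ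

/-- The canonical class `K_r = (−3, 1, …, 1)`. -/
def Kc (r : ℕ) : Fin (r + 1) → ℤ := fun i => if i = 0 then -3 else 1

/-- Exceptional classes (classes of `(−1)`-curves). -/
def Exceptional {r : ℕ} (E : Fin (r + 1) → ℤ) : Prop :=
  pair E E = -1 ∧ pair (Kc r) E = -1

/-- Nef classes: nonnegative pairing with every exceptional class. -/
def Nef {r : ℕ} (D : Fin (r + 1) → ℤ) : Prop :=
  ∀ E : Fin (r + 1) → ℤ, Exceptional E → 0 ≤ pair D E

/-- Conics: nef classes `Q` with `⟨Q,Q⟩ = 0` and `⟨K,Q⟩ = −2`. -/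
def Conic {r : ℕ} (Q : Fin (r + 1) → ℤ) : Prop :=
  Nef Q ∧ pair Q Q = 0 ∧ pair (Kc r) Q = -2

/-- Twisted cubics: nef classes `C` with `⟨C,C⟩ = 1` and `⟨K,C⟩ = −3`. -/
def TwistedCubic {r : ℕ} (C : Fin (r + 1) → ℤ) : Prop :=
  Nef C ∧ pair C C = 1 ∧ pair (Kc r) C = -3

lemma pair_expand (x y : Fin 6 → ℤ) :
    pair x y = x 0 * y 0 - (x 1 * y 1 + x 2 * y 2 + x 3 * y 3 + x 4 * y 4 + x 5 * y 5) := by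
  simp [pair, Fin.sum_univ_five]

lemma Kc_eq : Kc 5 = ![-3,1,1,1,1,1] := by
  funext i; fin_cases i <;> rfl

lemma pairK (E : Fin 6 → ℤ) :
    pair (Kc 5) E = -3 * E 0 - (E 1 + E 2 + E 3 + E 4 + E 5) := by
  rw [Kc_eq, pair_expand]
  norm_num [show (![-3,1,1,1,1,1] : Fin 6 → ℤ) 0 = -3 from rfl,
    show (![-3,1,1,1,1,1] : Fin 6 → ℤ) 1 = 1 from rfl,
    show (![-3,1,1,1,1,1] : Fin 6 → ℤ) 2 = 1 from rfl,
    show (![-3,1,1,1,1,1] : Fin 6 → ℤ) 3 = 1 from rfl,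
    show (![-3,1,1,1,1,1] : Fin 6 → ℤ) 4 = 1 from rfl,
    show (![-3,1,1,1,1,1] : Fin 6 → ℤ) 5 = 1 from rfl]

/-- The 16 exceptional classes on the degree-4 del Pezzo surface. -/
def Es : Finset (Fin 6 → ℤ) :=
  { ![0,1,0,0,0,0], ![0,0,1,0,0,0], ![0,0,0,1,0,0], ![0,0,0,0,1,0], ![0,0,0,0,0,1],
    ![1,-1,-1,0,0,0], ![1,-1,0,-1,0,0], ![1,-1,0,0,-1,0], ![1,-1,0,0,0,-1],
    ![1,0,-1,-1,0,0], ![1,0,-1,0,-1,0], ![1,0,-1,0,0,-1],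
    ![1,0,0,-1,-1,0], ![1,0,0,-1,0,-1], ![1,0,0,0,-1,-1],
    ![2,-1,-1,-1,-1,-1] }

lemma vec_eta (E : Fin 6 → ℤ) : E = ![E 0, E 1, E 2, E 3, E 4, E 5] := by
  funext i; fin_cases i <;> rfl

lemma int_np (n : ℤ) : 0 ≤ n ^ 2 + n := by
  rcases le_or_gt 0 n with h | h
  · nlinarith
  · nlinarith

lemma int_nm (n : ℤ) : 0 ≤ n ^ 2 - n := by
  have := int_np (-n); nlinarith

set_option maxHeartbeats 2000000 in
lemma case0 (a1 a2 a3 a4 a5 : ℤ)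
    (hsq : a1^2 + a2^2 + a3^2 + a4^2 + a5^2 = 1)
    (hsum : a1 + a2 + a3 + a4 + a5 = 1) :
    ![0, a1, a2, a3, a4, a5] ∈ Es := by
  have key : (a1^2 - a1) + (a2^2 - a2) + (a3^2 - a3) + (a4^2 - a4) + (a5^2 - a5) = 0 := by
    linarith
  have d1 : a1 = 0 ∨ a1 = 1 := by
    rcases mul_eq_zero.mp (show a1 * (a1 - 1) = 0 by
      nlinarith [int_nm a1, int_nm a2, int_nm a3, int_nm a4, int_nm a5]) with h | h <;> omega
  have d2 : a2 = 0 ∨ a2 = 1 := by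
    rcases mul_eq_zero.mp (show a2 * (a2 - 1) = 0 by
      nlinarith [int_nm a1, int_nm a2, int_nm a3, int_nm a4, int_nm a5]) with h | h <;> omega
  have d3 : a3 = 0 ∨ a3 = 1 := by
    rcases mul_eq_zero.mp (show a3 * (a3 - 1) = 0 by
      nlinarith [int_nm a1, int_nm a2, int_nm a3, int_nm a4, int_nm a5]) with h | h <;> omega
  have d4 : a4 = 0 ∨ a4 = 1 := by
    rcases mul_eq_zero.mp (show a4 * (a4 - 1) = 0 by
      nlinarith [int_nm a1, int_nm a2, int_nm a3, int_nm a4, int_nm a5]) with h | h <;> omega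
  have d5 : a5 = 0 ∨ a5 = 1 := by
    rcases mul_eq_zero.mp (show a5 * (a5 - 1) = 0 by
      nlinarith [int_nm a1, int_nm a2, int_nm a3, int_nm a4, int_nm a5]) with h | h <;> omega
  clear hsq key
  rcases d1 with rfl|rfl <;> rcases d2 with rfl|rfl <;> rcases d3 with rfl|rfl <;>
    rcases d4 with rfl|rfl <;> rcases d5 with rfl|rfl <;>
    first | (exfalso; omega) | decide

set_option maxHeartbeats 2000000 in
lemma case1 (a1 a2 a3 a4 a5 : ℤ)
    (hsq : a1^2 + a2^2 + a3^2 + a4^2 + a5^2 = 2)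
    (hsum : a1 + a2 + a3 + a4 + a5 = -2) :
    ![1, a1, a2, a3, a4, a5] ∈ Es := by
  have d1 : a1 = 0 ∨ a1 = -1 := by
    rcases mul_eq_zero.mp (show a1 * (a1 + 1) = 0 by
      nlinarith [int_np a1, int_np a2, int_np a3, int_np a4, int_np a5]) with h | h <;> omega
  have d2 : a2 = 0 ∨ a2 = -1 := by
    rcases mul_eq_zero.mp (show a2 * (a2 + 1) = 0 by
      nlinarith [int_np a1, int_np a2, int_np a3, int_np a4, int_np a5]) with h | h <;> omega
  have d3 : a3 = 0 ∨ a3 = -1 := by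
    rcases mul_eq_zero.mp (show a3 * (a3 + 1) = 0 by
      nlinarith [int_np a1, int_np a2, int_np a3, int_np a4, int_np a5]) with h | h <;> omega
  have d4 : a4 = 0 ∨ a4 = -1 := by
    rcases mul_eq_zero.mp (show a4 * (a4 + 1) = 0 by
      nlinarith [int_np a1, int_np a2, int_np a3, int_np a4, int_np a5]) with h | h <;> omega
  have d5 : a5 = 0 ∨ a5 = -1 := by
    rcases mul_eq_zero.mp (show a5 * (a5 + 1) = 0 by
      nlinarith [int_np a1, int_np a2, int_np a3, int_np a4, int_np a5]) with h | h <;> omega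
  clear hsq
  rcases d1 with rfl|rfl <;> rcases d2 with rfl|rfl <;> rcases d3 with rfl|rfl <;>
    rcases d4 with rfl|rfl <;> rcases d5 with rfl|rfl <;>
    first | (exfalso; omega) | decide

set_option maxHeartbeats 2000000 in
lemma case2 (a1 a2 a3 a4 a5 : ℤ)
    (hsq : a1^2 + a2^2 + a3^2 + a4^2 + a5^2 = 5)
    (hsum : a1 + a2 + a3 + a4 + a5 = -5) :
    ![2, a1, a2, a3, a4, a5] ∈ Es := by
  have e1 : a1 = -1 := by
    nlinarith [sq_nonneg (a1+1), sq_nonneg (a2+1), sq_nonneg (a3+1), sq_nonneg (a4+1), sq_nonneg (a5+1)]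
  have e2 : a2 = -1 := by
    nlinarith [sq_nonneg (a1+1), sq_nonneg (a2+1), sq_nonneg (a3+1), sq_nonneg (a4+1), sq_nonneg (a5+1)]
  have e3 : a3 = -1 := by
    nlinarith [sq_nonneg (a1+1), sq_nonneg (a2+1), sq_nonneg (a3+1), sq_nonneg (a4+1), sq_nonneg (a5+1)]
  have e4 : a4 = -1 := by
    nlinarith [sq_nonneg (a1+1), sq_nonneg (a2+1), sq_nonneg (a3+1), sq_nonneg (a4+1), sq_nonneg (a5+1)]
  have e5 : a5 = -1 := by
    nlinarith [sq_nonneg (a1+1), sq_nonneg (a2+1), sq_nonneg (a3+1), sq_nonneg (a4+1), sq_nonneg (a5+1)]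
  subst e1 e2 e3 e4 e5; decide

set_option maxHeartbeats 2000000 in
lemma exc_iff (E : Fin 6 → ℤ) : Exceptional E ↔ E ∈ Es := by
  constructor
  · rintro ⟨h1, h2⟩
    rw [pair_expand] at h1
    rw [pairK] at h2
    obtain ⟨a0, ha0⟩ : ∃ x, E 0 = x := ⟨_, rfl⟩
    obtain ⟨a1, ha1⟩ : ∃ x, E 1 = x := ⟨_, rfl⟩
    obtain ⟨a2, ha2⟩ : ∃ x, E 2 = x := ⟨_, rfl⟩
    obtain ⟨a3, ha3⟩ : ∃ x, E 3 = x := ⟨_, rfl⟩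
    obtain ⟨a4, ha4⟩ : ∃ x, E 4 = x := ⟨_, rfl⟩
    obtain ⟨a5, ha5⟩ : ∃ x, E 5 = x := ⟨_, rfl⟩
    rw [vec_eta E, ha0, ha1, ha2, ha3, ha4, ha5]
    rw [ha0, ha1, ha2, ha3, ha4, ha5] at h1 h2
    have hsq : a1^2 + a2^2 + a3^2 + a4^2 + a5^2 = a0^2 + 1 := by nlinarith
    have hsum : a1 + a2 + a3 + a4 + a5 = -3*a0 + 1 := by linarith
    have hb : 0 ≤ a0 ∧ a0 ≤ 2 := by
      constructor <;>
      nlinarith [sq_nonneg (a1-a2), sq_nonneg (a1-a3), sq_nonneg (a1-a4), sq_nonneg (a1-a5),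
        sq_nonneg (a2-a3), sq_nonneg (a2-a4), sq_nonneg (a2-a5), sq_nonneg (a3-a4),
        sq_nonneg (a3-a5), sq_nonneg (a4-a5), sq_nonneg (a0-1), sq_nonneg (a0-2), sq_nonneg a0]
    obtain ⟨hb1, hb2⟩ := hb
    interval_cases a0
    · exact case0 a1 a2 a3 a4 a5 (by linarith) (by linarith)
    · exact case1 a1 a2 a3 a4 a5 (by linarith) (by linarith)
    · exact case2 a1 a2 a3 a4 a5 (by linarith) (by linarith)
  · intro h
    fin_cases h <;>
      exact ⟨by rw [pair_expand]; decide, by rw [pairK]; decide⟩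

/-- the 106 sums -/
def Ds : Finset (Fin 6 → ℤ) := (Es ×ˢ Es).image (fun p => p.1 + p.2)

set_option maxHeartbeats 2000000 in
set_option maxRecDepth 20000 in
lemma card_Ds : Ds.card = 106 := by decide

/-- The number of classes `D ∈ Λ₅` expressible as a sum `E + E′` of two (not
necessarily distinct) exceptional classes is exactly
`5 + 10 + 30 + 5 + 10 + 30 + 5 + 10 + 1 = 106`. -/
theorem sum_of_two_exceptional_count :
    {D : Fin (5 + 1) → ℤ |
        ∃ E E' : Fin (5 + 1) → ℤ, Exceptional E ∧ Exceptional E' ∧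
          D = E + E'}.Finite ∧
    {D : Fin (5 + 1) → ℤ |
        ∃ E E' : Fin (5 + 1) → ℤ, Exceptional E ∧ Exceptional E' ∧
          D = E + E'}.ncard = 106 := by
  have hset : {D : Fin (5 + 1) → ℤ |
      ∃ E E' : Fin (5 + 1) → ℤ, Exceptional E ∧ Exceptional E' ∧ D = E + E'} = ↑Ds := by
    ext D
    simp only [Set.mem_setOf_eq, Ds, Finset.coe_image, Set.mem_image, Finset.mem_coe,
      Finset.mem_product, Finset.mem_coe, Prod.exists]
    constructor
    · rintro ⟨E, E', hE, hE', rfl⟩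
      exact ⟨E, E', ⟨(exc_iff E).mp hE, (exc_iff E').mp hE'⟩, rfl⟩
    · rintro ⟨E, E', ⟨hE, hE'⟩, rfl⟩
      exact ⟨E, E', (exc_iff E).mpr hE, (exc_iff E').mpr hE', rfl⟩
  rw [hset]
  exact ⟨Ds.finite_toSet, by rw [Set.ncard_coe_finset, card_Ds]⟩
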